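/- For m ≥ 2, every λ ∈ ℂ is an eigenvalue of A_{z^m}*, the adjoint of the Liouville operator with symbol z^m on H², with eigenspace of dimension at least m−1: for each k ∈ {1,...,m−1}, the function H_k(z) = Σ_{n≥0} [ λⁿ / Π_{j=0}^{n−1}(k + j(m−1)) ] z^{k+n(m−1)} lies in H² and satisfies A_{z^m}* H_k = λ H_k. -/
import Mathlib


open Metric ComplexConjugate Classical

/-- Taylor coefficients of `H_k(z) = Σₙ [λⁿ / Πⱼ₌₀^{n-1}(k+j(m−1))] z^{k+n(m−1)}`. -/

noncomputable def Hcoef (m k : ℕ) (lam : ℂ) (i : ℕ) : ℂ :=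
  if h : ∃ n : ℕ, i = k + n * (m - 1) then
    lam ^ h.choose / ∏ j ∈ Finset.range h.choose, ((k : ℂ) + (j : ℂ) * ((m : ℂ) - 1))
  else 0

lemma Hcoef_apply (m k : ℕ) (hm : 2 ≤ m) (lam : ℂ) (n : ℕ) :
    Hcoef m k lam (k + n * (m - 1)) =
      lam ^ n / ∏ j ∈ Finset.range n, ((k : ℂ) + (j : ℂ) * ((m : ℂ) - 1)) := by
  have hd : 0 < m - 1 := by omega
  have hex : ∃ n' : ℕ, k + n * (m - 1) = k + n' * (m - 1) := ⟨n, rfl⟩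
  rw [Hcoef, dif_pos hex]
  have hch : hex.choose = n := by
    have h := hex.choose_spec
    have h2 : n * (m - 1) = hex.choose * (m - 1) := by omega
    exact (Nat.eq_of_mul_eq_mul_right hd h2).symm
  rw [hch]

lemma Hcoef_zero (m k : ℕ) (lam : ℂ) (i : ℕ)
    (h : ¬∃ n : ℕ, i = k + n * (m - 1)) : Hcoef m k lam i = 0 := by
  rw [Hcoef, dif_neg h]

lemma factor_cast (m k j : ℕ) (hm : 2 ≤ m) :
    ((k : ℂ) + (j : ℂ) * ((m : ℂ) - 1)) = ((k + j * (m - 1) : ℕ) : ℂ) := by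
  push_cast [Nat.cast_sub (show 1 ≤ m by omega)]
  ring

lemma prod_cast (m k n : ℕ) (hm : 2 ≤ m) :
    (∏ j ∈ Finset.range n, ((k : ℂ) + (j : ℂ) * ((m : ℂ) - 1)))
      = ((∏ j ∈ Finset.range n, (k + j * (m - 1)) : ℕ) : ℂ) := by
  rw [Nat.cast_prod]
  exact Finset.prod_congr rfl fun j _ => factor_cast m k j hm

lemma prod_pos (m k n : ℕ) (hk : 1 ≤ k) :
    0 < ∏ j ∈ Finset.range n, (k + j * (m - 1)) :=
  Finset.prod_pos fun j _ => by omega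

lemma factorial_le_prod (m k n : ℕ) (hm : 2 ≤ m) (hk : 1 ≤ k) :
    n.factorial ≤ ∏ j ∈ Finset.range n, (k + j * (m - 1)) := by
  rw [← Finset.prod_range_add_one_eq_factorial]
  refine Finset.prod_le_prod' fun j _ => ?_
  have : j * 1 ≤ j * (m - 1) := Nat.mul_le_mul_left j (by omega)
  omega

/-- For `m ≥ 2`, every `λ ∈ ℂ` is an eigenvalue of `A_{z^m}*` (which acts on Taylor
coefficients by `(hₙ) ↦ (n·h_{n+m−1})`) with eigenspace of dimension at least `m−1`:
for each `k ∈ {1,…,m−1}` the function `H_k` lies in `H²` and satisfies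
`A_{z^m}* H_k = λ H_k`, and the `H_k` are linearly independent. -/
theorem every_lambda_eigenvalue_adjoint_zm (m : ℕ) (hm : 2 ≤ m) (lam : ℂ) :
    (∀ k : ℕ, 1 ≤ k → k ≤ m - 1 →
      Memℓp (Hcoef m k lam) 2 ∧
      ∀ n : ℕ, (n : ℂ) * Hcoef m k lam (n + m - 1) = lam * Hcoef m k lam n) ∧
    LinearIndependent ℂ (fun k : Fin (m - 1) => Hcoef m ((k : ℕ) + 1) lam) := by
  have hd : 0 < m - 1 := by omega
  constructor
  · intro k hk hkm
    constructor
    · -- Memℓp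
      apply memℓp_gen
      have h2 : ∀ x : ℝ, x ^ (2 : ENNReal).toReal = x ^ (2 : ℕ) := fun x => by
        rw [show ((2 : ENNReal).toReal) = ((2 : ℕ) : ℝ) by norm_num, Real.rpow_natCast]
      simp only [h2]
      have hinj : Function.Injective (fun n : ℕ => k + n * (m - 1)) := by
        intro a b hab
        simp only at hab
        have : a * (m - 1) = b * (m - 1) := by omega
        exact Nat.eq_of_mul_eq_mul_right hd this
      rw [← hinj.summable_iff (f := fun i => ‖Hcoef m k lam i‖ ^ (2 : ℕ))
        (by
          intro i hi
          have : ¬∃ n : ℕ, i = k + n * (m - 1) := by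
            rintro ⟨n, rfl⟩
            exact hi ⟨n, rfl⟩
          simp [Hcoef_zero m k lam i this])]
      have key : ∀ n : ℕ,
          ‖Hcoef m k lam (k + n * (m - 1))‖ ^ (2 : ℕ)
            ≤ (‖lam‖ ^ 2) ^ n / n.factorial := by
        intro n
        rw [Hcoef_apply m k hm lam n, prod_cast m k n hm]
        set N := ∏ j ∈ Finset.range n, (k + j * (m - 1)) with hN
        have hNpos := prod_pos m k n hk
        have hfac := factorial_le_prod m k n hm hk
        have hfacpos := Nat.factorial_pos n
        rw [norm_div, norm_pow, Complex.norm_natCast]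
        rw [div_pow, ← pow_mul]
        have hbound : ((n.factorial : ℝ)) ≤ (N : ℝ) ^ 2 := by
          have h1 : (n.factorial : ℝ) ≤ (N : ℝ) := by exact_mod_cast hfac
          have h2 : (N : ℝ) ≤ (N : ℝ) ^ 2 := by
            nlinarith [show (1:ℝ) ≤ (N:ℝ) by exact_mod_cast hNpos]
          linarith
        have hnum : (0:ℝ) ≤ ‖lam‖ ^ (n * 2) := by positivity
        calc ‖lam‖ ^ (n * 2) / (N : ℝ) ^ 2
            ≤ ‖lam‖ ^ (n * 2) / (n.factorial : ℝ) := by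
              apply div_le_div_of_nonneg_left hnum
              · exact_mod_cast hfacpos
              · exact hbound
          _ = (‖lam‖ ^ 2) ^ n / n.factorial := by rw [Nat.mul_comm n 2, pow_mul]
      simp only [Function.comp_def]
      refine Summable.of_nonneg_of_le (fun n => ?_) key
        (Real.summable_pow_div_factorial (‖lam‖ ^ 2))
      positivity
    · -- recurrence
      intro n
      have hrw : n + m - 1 = n + (m - 1) := by omega
      rw [hrw]
      by_cases h : ∃ t : ℕ, n = k + t * (m - 1)
      · obtain ⟨t, rfl⟩ := h
        have h2 : k + t * (m - 1) + (m - 1) = k + (t + 1) * (m - 1) := by ring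
        rw [h2, Hcoef_apply m k hm lam (t + 1), Hcoef_apply m k hm lam t,
          Finset.prod_range_succ]
        have hcast : ((k + t * (m - 1) : ℕ) : ℂ) = (k : ℂ) + (t : ℂ) * ((m : ℂ) - 1) :=
          (factor_cast m k t hm).symm
        have hne : ((k : ℂ) + (t : ℂ) * ((m : ℂ) - 1)) ≠ 0 := by
          rw [factor_cast m k t hm]
          exact_mod_cast (by omega : k + t * (m - 1) ≠ 0)
        have hP : (∏ j ∈ Finset.range t, ((k : ℂ) + (j : ℂ) * ((m : ℂ) - 1))) ≠ 0 := by
          rw [prod_cast m k t hm]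
          exact_mod_cast (prod_pos m k t hk).ne'
        rw [hcast]
        field_simp
        ring
      · rw [Hcoef_zero m k lam _ h, mul_zero]
        by_cases h2 : ∃ s : ℕ, n + (m - 1) = k + s * (m - 1)
        · obtain ⟨s, hs⟩ := h2
          have hn0 : n = 0 := by
            rcases Nat.eq_zero_or_pos s with rfl | hs1
            · omega
            · exfalso
              apply h
              obtain ⟨s', rfl⟩ := Nat.exists_eq_add_of_le hs1
              have hmul : (1 + s') * (m - 1) = (m - 1) + s' * (m - 1) := by ring
              rw [hmul] at hs
              exact ⟨s', by omega⟩
          rw [hn0]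
          simp
        · rw [Hcoef_zero m k lam _ h2, mul_zero]
  · -- linear independence
    rw [Fintype.linearIndependent_iff]
    intro g hg i
    have hval : ∀ j : Fin (m - 1),
        Hcoef m ((j : ℕ) + 1) lam ((i : ℕ) + 1) = if j = i then 1 else 0 := by
      intro j
      by_cases hji : j = i
      · subst hji
        have h1 := Hcoef_apply m ((j : ℕ) + 1) hm lam 0
        simp only [Nat.zero_mul, Nat.add_zero, pow_zero, Finset.range_zero,
          Finset.prod_empty, div_one] at h1
        simp [h1]
      · rw [if_neg hji]
        apply Hcoef_zero
        rintro ⟨t, ht⟩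
        rcases Nat.eq_zero_or_pos t with rfl | ht1
        · simp at ht
          exact hji (Fin.ext (by omega))
        · have hle : m - 1 ≤ t * (m - 1) := Nat.le_mul_of_pos_left (m - 1) ht1
          have hi2 : (i : ℕ) < m - 1 := i.isLt
          omega
    have := congrFun hg ((i : ℕ) + 1)
    simp only [Finset.sum_apply, Pi.smul_apply, smul_eq_mul, Pi.zero_apply, hval,
      mul_ite, mul_one, mul_zero, Finset.sum_ite_eq', Finset.mem_univ, if_true] at this
    exact this
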